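/- If a and b are independent uniform random variables on (0,1), then E[((a-1)² + (b-1)²)/(a+b-2)²] = 2 - ln 4, and in particular this expectation is strictly greater than 1/2. -/

import Mathlib

open MeasureTheory

/-- The distribution of a uniform random variable on (0,1). -/
noncomputable def unif01 : Measure ℝ := volume.restrict (Set.Ioo (0:ℝ) 1)

/-- value of the inner integral, written in a form continuous on [0,1]. -/
noncomputable def Fn (a : ℝ) : ℝ :=
  3 - 2*a + 2*(a-1)^2/(a-2) + 2*(a-1)*Real.log (2-a) + 2*((1-a)*Real.log (1-a))

/-- antiderivative of Fn on (0,1). -/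
noncomputable def Phi (a : ℝ) : ℝ :=
  3*a - (a-1)^2/2 + (a-2)^2/2 + Real.log (2-a) + (a-1)^2*Real.log (2-a)
    - (1-a)*((1-a)*Real.log (1-a))

lemma inner_eq (a : ℝ) (ha : a ∈ Set.Ioo (0:ℝ) 1) :
    (∫ b, ((a - 1) ^ 2 + (b - 1) ^ 2) / (a + b - 2) ^ 2 ∂unif01) = Fn a := by
  obtain ⟨ha0, ha1⟩ := ha
  have key : ∀ b ∈ Set.uIcc (0:ℝ) 1, a + b - 2 < 0 := by
    intro b hb
    rw [Set.uIcc_of_le (by norm_num)] at hb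
    have := hb.2; linarith
  -- antiderivative in b
  set H : ℝ → ℝ := fun b => -2*(a-1)^2 * (a+b-2)⁻¹ - 2*(a-1)*Real.log (2-a-b) + (a+b-2)
    with hH
  have hderiv : ∀ b ∈ Set.uIcc (0:ℝ) 1,
      HasDerivAt H (((a - 1) ^ 2 + (b - 1) ^ 2) / (a + b - 2) ^ 2) b := by
    intro b hb
    have hne : a + b - 2 ≠ 0 := ne_of_lt (key b hb)
    have hne2 : 2 - a - b ≠ 0 := by intro h; apply hne; linarith
    have h1 : HasDerivAt (fun b : ℝ => a + b - 2) 1 b := by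
      simpa using ((hasDerivAt_id b).const_add a).sub_const 2
    have h2 : HasDerivAt (fun b : ℝ => (a + b - 2)⁻¹) (-1/(a+b-2)^2) b := by
      simpa using h1.fun_inv hne
    have h3 : HasDerivAt (fun b : ℝ => 2 - a - b) (-1) b := by
      simpa using ((hasDerivAt_id b).const_sub (2 - a))
    have h4 : HasDerivAt (fun b : ℝ => Real.log (2 - a - b)) ((2-a-b)⁻¹ * (-1)) b :=
      (Real.hasDerivAt_log hne2).comp b h3
    have h5 : HasDerivAt H
        (-2*(a-1)^2 * (-1/(a+b-2)^2) - 2*(a-1)*((2-a-b)⁻¹ * (-1)) + 1) b := by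
      exact ((h2.const_mul (-2*(a-1)^2)).sub (h4.const_mul (2*(a-1)))).add h1
    convert h5 using 1
    field_simp
    ring
  have hint : IntervalIntegrable
      (fun b => ((a - 1) ^ 2 + (b - 1) ^ 2) / (a + b - 2) ^ 2) volume 0 1 := by
    apply ContinuousOn.intervalIntegrable
    apply ContinuousOn.div
    · fun_prop
    · fun_prop
    · intro b hb
      exact pow_ne_zero 2 (ne_of_lt (key b hb))
  have hFTC := intervalIntegral.integral_eq_sub_of_hasDerivAt hderiv hint
  have hlog1 : Real.log (2 - a - 1) = Real.log (1 - a) := by congr 1; ring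
  have hIoc : (∫ b in Set.Ioc (0:ℝ) 1, ((a - 1) ^ 2 + (b - 1) ^ 2) / (a + b - 2) ^ 2)
      = H 1 - H 0 := by
    rw [← hFTC, intervalIntegral.integral_of_le (by norm_num)]
  rw [unif01, ← integral_Ioc_eq_integral_Ioo, hIoc, hH, Fn]
  simp only [hlog1]
  have e1 : a + 1 - 2 = a - 1 := by ring
  have e2 : (2:ℝ) - a - 0 = 2 - a := by ring
  have e3 : a + 0 - 2 = a - 2 := by ring
  rw [e1, e2, e3]
  have hne1 : a - 1 ≠ 0 := by intro h; linarith
  have hne2 : a - 2 ≠ 0 := by intro h; linarith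
  field_simp
  ring

lemma outer_eq : (∫ a in Set.Ioo (0:ℝ) 1, Fn a) = 2 - Real.log 4 := by
  have hcont : ContinuousOn Fn (Set.Icc 0 1) := by
    apply ContinuousOn.add
    apply ContinuousOn.add
    apply ContinuousOn.add
    · fun_prop
    · apply ContinuousOn.div
      · fun_prop
      · fun_prop
      · intro a ha; intro h
        have := ha.2; linarith [ha.2]
    · apply ContinuousOn.mul
      · fun_prop
      · apply ContinuousOn.log
        · fun_prop
        · intro a ha; have := ha.2; intro h; linarith
    · have h := Real.continuous_mul_log.comp (show Continuous fun a : ℝ => 1 - a from by continuity)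
      have : Continuous fun a : ℝ => 2*((1-a)*Real.log (1-a)) := by
        exact continuous_const.mul h
      exact this.continuousOn
  have hderiv : ∀ a ∈ Set.Ioo (0:ℝ) 1, HasDerivAt Phi (Fn a) a := by
    intro a ha
    obtain ⟨ha0, ha1⟩ := ha
    have h2a : (2:ℝ) - a ≠ 0 := by intro h; linarith
    have h1a : (1:ℝ) - a ≠ 0 := by intro h; linarith
    have d1 : HasDerivAt (fun a : ℝ => 2 - a) (-1) a := by
      simpa using (hasDerivAt_id a).const_sub 2
    have d1' : HasDerivAt (fun a : ℝ => 1 - a) (-1) a := by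
      simpa using (hasDerivAt_id a).const_sub 1
    have dlog2 : HasDerivAt (fun a : ℝ => Real.log (2 - a)) ((2-a)⁻¹ * (-1)) a :=
      (Real.hasDerivAt_log h2a).comp a d1
    have dlog1 : HasDerivAt (fun a : ℝ => Real.log (1 - a)) ((1-a)⁻¹ * (-1)) a :=
      (Real.hasDerivAt_log h1a).comp a d1'
    have dsq : HasDerivAt (fun a : ℝ => (a-1)^2) (2*(a-1)) a := by
      have := ((hasDerivAt_id a).sub_const 1).fun_pow 2
      simpa [mul_comm] using this
    have dsq2 : HasDerivAt (fun a : ℝ => (a-2)^2) (2*(a-2)) a := by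
      have := ((hasDerivAt_id a).sub_const 2).fun_pow 2
      simpa [mul_comm] using this
    have dA : HasDerivAt (fun a : ℝ => 3*a) 3 a := by
      simpa using (hasDerivAt_id a).const_mul 3
    have dB : HasDerivAt (fun a : ℝ => (a-1)^2/2) (2*(a-1)/2) a := dsq.div_const 2
    have dC : HasDerivAt (fun a : ℝ => (a-2)^2/2) (2*(a-2)/2) a := dsq2.div_const 2
    have dD : HasDerivAt (fun a : ℝ => (a-1)^2*Real.log (2-a))
        (2*(a-1)*Real.log (2-a) + (a-1)^2*((2-a)⁻¹ * (-1))) a := dsq.mul dlog2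
    have dE : HasDerivAt (fun a : ℝ => (1-a)*Real.log (1-a))
        (-1*Real.log (1-a) + (1-a)*((1-a)⁻¹ * (-1))) a := d1'.mul dlog1
    have dF : HasDerivAt (fun a : ℝ => (1-a)*((1-a)*Real.log (1-a)))
        (-1*((1-a)*Real.log (1-a)) + (1-a)*(-1*Real.log (1-a) + (1-a)*((1-a)⁻¹ * (-1)))) a :=
      d1'.mul dE
    have dPhi : HasDerivAt Phi
        (3 - 2*(a-1)/2 + 2*(a-2)/2 + (2-a)⁻¹ * (-1)
          + (2*(a-1)*Real.log (2-a) + (a-1)^2*((2-a)⁻¹ * (-1)))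
          - (-1*((1-a)*Real.log (1-a)) + (1-a)*(-1*Real.log (1-a) + (1-a)*((1-a)⁻¹ * (-1))))) a := by
      exact ((((dA.sub dB).add dC).add dlog2).add dD).sub dF
    convert dPhi using 1
    rw [Fn]
    have hm2 : a - 2 ≠ 0 := by intro h; linarith
    field_simp
    ring
  have hint : IntervalIntegrable Fn volume 0 1 := by
    apply ContinuousOn.intervalIntegrable
    rwa [Set.uIcc_of_le (by norm_num)]
  have hcontPhi : ContinuousOn Phi (Set.Icc 0 1) := by
    have hml := Real.continuous_mul_log.comp (show Continuous fun a : ℝ => 1 - a from by continuity)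
    have hlast : Continuous fun a : ℝ => (1-a)*((1-a)*Real.log (1-a)) := by
      exact (show Continuous fun a : ℝ => 1 - a from by continuity).mul hml
    have hlog2 : ContinuousOn (fun a : ℝ => Real.log (2 - a)) (Set.Icc 0 1) := by
      apply ContinuousOn.log
      · fun_prop
      · intro a ha; have := ha.2; intro h; linarith
    unfold Phi
    apply ContinuousOn.sub
    apply ContinuousOn.add
    apply ContinuousOn.add
    apply ContinuousOn.add
    apply ContinuousOn.sub
    · fun_prop
    · fun_prop
    · fun_prop
    · exact hlog2
    · exact ContinuousOn.mul (by fun_prop) hlog2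
    · exact hlast.continuousOn
  have hFTC := intervalIntegral.integral_eq_sub_of_hasDeriv_right_of_le (by norm_num : (0:ℝ) ≤ 1)
    hcontPhi (fun x hx => (hderiv x hx).hasDerivWithinAt) hint
  rw [← integral_Ioc_eq_integral_Ioo, ← intervalIntegral.integral_of_le (by norm_num), hFTC]
  simp only [Phi]
  norm_num [Real.log_one]
  have h4 : Real.log 4 = 2 * Real.log 2 := by
    rw [show (4:ℝ) = 2^2 by norm_num, Real.log_pow]; push_cast; ring
  rw [h4]
  ring

theorem stmt_5 :
    (∫ a, ∫ b, ((a - 1) ^ 2 + (b - 1) ^ 2) / (a + b - 2) ^ 2 ∂unif01 ∂unif01) =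
        2 - Real.log 4 ∧
      (1 / 2 : ℝ) <
        ∫ a, ∫ b, ((a - 1) ^ 2 + (b - 1) ^ 2) / (a + b - 2) ^ 2 ∂unif01 ∂unif01 := by
  have hmain : (∫ a, ∫ b, ((a - 1) ^ 2 + (b - 1) ^ 2) / (a + b - 2) ^ 2 ∂unif01 ∂unif01)
      = 2 - Real.log 4 := by
    show (∫ a in Set.Ioo (0:ℝ) 1, ∫ b, ((a - 1) ^ 2 + (b - 1) ^ 2) / (a + b - 2) ^ 2 ∂unif01)
        = _
    rw [setIntegral_congr_fun measurableSet_Ioo (fun a ha => inner_eq a ha)]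
    exact outer_eq
  refine ⟨hmain, ?_⟩
  rw [hmain]
  have h4 : Real.log 4 = 2 * Real.log 2 := by
    rw [show (4:ℝ) = 2^2 by norm_num, Real.log_pow]; push_cast; ring
  have := Real.log_two_lt_d9
  rw [h4]; norm_num at this ⊢; linarith
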